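/- Let q ≥ 2, and let r₁, ..., rₙ, s₁, ..., s_k be integers such that {±r₁, ..., ±rₙ, ±s₁, ..., ±s_k} is exactly a complete set of representatives of the units modulo q (so 2n + 2k = φ(q)). Let g be the block-diagonal rotation matrix with blocks Rot(rⱼ/q) and ḡ the one with blocks Rot(sⱼ/q). Then for any t with gcd(t, q) = 1, det(zI - g^t)·det(zI - ḡ^t) = Ψ_q(z), where Ψ_q is the polynomial ∏(z - η) over all primitive q-th roots of unity η. -/

import Mathlib

open Finset

/-- The 2×2 rotation matrix by angle `2πν`, viewed over `ℂ`. -/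
noncomputable def Rot (ν : ℝ) : Matrix (Fin 2) (Fin 2) ℂ :=
  !![(Real.cos (2 * Real.pi * ν) : ℂ), (Real.sin (2 * Real.pi * ν) : ℂ);
     (-Real.sin (2 * Real.pi * ν) : ℂ), (Real.cos (2 * Real.pi * ν) : ℂ)]

/-- The block-diagonal matrix with rotation blocks `Rot (v j / q)`. -/
noncomputable def blockRot {n : ℕ} (q : ℕ) (v : Fin n → ℤ) :
    Matrix (Fin 2 × Fin n) (Fin 2 × Fin n) ℂ :=
  Matrix.blockDiagonal (fun j => Rot ((v j : ℝ) / q))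

open Complex Real

lemma Rot_mul (a b : ℝ) : Rot a * Rot b = Rot (a + b) := by
  unfold Rot
  rw [Matrix.mul_fin_two]
  have h1 : 2 * Real.pi * (a + b) = 2*Real.pi*a + 2*Real.pi*b := by ring
  rw [h1, Real.cos_add, Real.sin_add]
  congr 1 <;> push_cast <;> ring

lemma Rot_zero : Rot 0 = 1 := by
  unfold Rot
  simp [Matrix.one_fin_two]

lemma Rot_pow (a : ℝ) (t : ℕ) : Rot a ^ t = Rot (t * a) := by
  induction t with
  | zero => simp [Rot_zero]
  | succ m ih =>
    rw [pow_succ, ih, Rot_mul]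
    congr 1
    push_cast
    ring

lemma det_rot (a : ℝ) (z : ℂ) :
    (z • (1 : Matrix (Fin 2) (Fin 2) ℂ) - Rot a).det
      = (z - Complex.exp (2 * Real.pi * a * Complex.I))
        * (z - Complex.exp (-(2 * Real.pi * a) * Complex.I)) := by
  set c : ℂ := (Real.cos (2*Real.pi*a) : ℂ)
  set s : ℂ := (Real.sin (2*Real.pi*a) : ℂ)
  have hM : z • (1 : Matrix (Fin 2) (Fin 2) ℂ) - Rot a = !![z - c, -s; s, z - c] := by
    ext i j
    fin_cases i <;> fin_cases j <;> simp [Rot, Matrix.one_fin_two, c, s]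
  have e1 : Complex.exp (2 * Real.pi * a * Complex.I) = c + s * Complex.I := by
    rw [Complex.exp_mul_I]; simp only [c, s]; norm_cast
  have e2 : Complex.exp (-(2 * Real.pi * a) * Complex.I) = c - s * Complex.I := by
    rw [Complex.exp_mul_I]
    simp only [c, s]
    push_cast [Complex.cos_neg, Complex.sin_neg]
    norm_cast
    push_cast
    ring
  rw [hM, Matrix.det_fin_two_of, e1, e2]
  linear_combination s^2 * Complex.I_sq

lemma block_det (q : ℕ) (hq : (q:ℝ) ≠ 0) (t : ℕ) (m : ℤ) (z : ℂ) :
    (z • (1 : Matrix (Fin 2) (Fin 2) ℂ) - (Rot ((m:ℝ)/q))^t).det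
      = (z - Complex.exp (2*Real.pi*Complex.I/q) ^ ((t:ℤ)*m))
        * (z - Complex.exp (2*Real.pi*Complex.I/q) ^ (-((t:ℤ)*m))) := by
  rw [Rot_pow, det_rot]
  push_cast
  have key : ∀ x : ℤ, Complex.exp ((x:ℂ) * (2*Real.pi*Complex.I/q))
      = Complex.exp (2*Real.pi*Complex.I/q) ^ x := Complex.exp_int_mul _
  congr 1
  · congr 1
    rw [← key]
    congr 1
    field_simp
    push_cast
    ring
  · congr 1
    rw [← key]
    congr 1
    field_simp
    push_cast
    ring


theorem det_mul_det_eq_cyclotomic (q : ℕ) (hq : 2 ≤ q) (n k : ℕ)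
    (r : Fin n → ℤ) (s : Fin k → ℤ)
    (hinj : Function.Injective (fun p : (Fin n ⊕ Fin k) × Bool =>
      (if p.2 then ((Sum.elim r s p.1 : ℤ) : ZMod q)
        else -((Sum.elim r s p.1 : ℤ) : ZMod q))))
    (hrange : Set.range (fun p : (Fin n ⊕ Fin k) × Bool =>
      (if p.2 then ((Sum.elim r s p.1 : ℤ) : ZMod q)
        else -((Sum.elim r s p.1 : ℤ) : ZMod q))) = {x : ZMod q | IsUnit x})
    (t : ℕ) (ht : Nat.Coprime t q) (z : ℂ) :
    ((z • (1 : Matrix (Fin 2 × Fin n) (Fin 2 × Fin n) ℂ)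
        - (blockRot q r) ^ t).det)
      * ((z • (1 : Matrix (Fin 2 × Fin k) (Fin 2 × Fin k) ℂ)
        - (blockRot q s) ^ t).det)
      = ∏ η ∈ primitiveRoots q ℂ, (z - η) := by
  haveI : NeZero q := ⟨by omega⟩
  have hq0 : 0 < q := by omega
  have hqR : (q:ℝ) ≠ 0 := by positivity
  set ζ : ℂ := Complex.exp (2*Real.pi*Complex.I/q) with hζdef
  have hζ : IsPrimitiveRoot ζ q := Complex.isPrimitiveRoot_exp q (by omega)
  -- congruence of powers of ζ
  have zcongr : ∀ a b : ℤ, ((a : ZMod q) = (b : ZMod q)) → ζ ^ a = ζ ^ b := by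
    intro a b h
    have hd : (q:ℤ) ∣ a - b := by
      rwa [← ZMod.intCast_zmod_eq_zero_iff_dvd, Int.cast_sub, sub_eq_zero]
    have h1 : ζ ^ (a - b) = 1 := (hζ.zpow_eq_one_iff_dvd _).2 hd
    calc ζ ^ a = ζ ^ (b + (a - b)) := by ring_nf
    _ = ζ ^ b * ζ ^ (a - b) := zpow_add₀ (Complex.exp_ne_zero _) _ _
    _ = ζ ^ b := by rw [h1, mul_one]
  -- the factor function
  set F : ZMod q → ℂ := fun x => z - ζ ^ (t * x.val) with hFdef
  have keyF : ∀ m : ℤ, z - ζ ^ ((t:ℤ) * m) = F ((m : ZMod q)) := by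
    intro m
    show _ = z - ζ ^ (t * ((m : ZMod q)).val)
    congr 1
    rw [← zpow_natCast]
    apply zcongr
    push_cast [ZMod.natCast_val, ZMod.cast_id]
    norm_cast
  have keyFneg : ∀ m : ℤ, z - ζ ^ (-((t:ℤ) * m)) = F (-((m : ZMod q))) := by
    intro m
    have h := keyF (-m)
    rw [mul_neg] at h
    rw [h]
    congr 1
    push_cast
    ring
  -- determinant of each block matrix
  have hdet : ∀ (N : ℕ) (v : Fin N → ℤ),
      (z • (1 : Matrix (Fin 2 × Fin N) (Fin 2 × Fin N) ℂ) - blockRot q v ^ t).det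
        = ∏ j : Fin N, (F (((v j : ℤ) : ZMod q)) * F (-((v j : ℤ) : ZMod q))) := by
    intro N v
    rw [show blockRot q v = Matrix.blockDiagonal (fun j => Rot ((v j : ℝ) / q)) from rfl,
      ← Matrix.blockDiagonal_pow, ← Matrix.blockDiagonal_one, ← Matrix.blockDiagonal_smul,
      ← Matrix.blockDiagonal_sub, Matrix.det_blockDiagonal]
    refine Finset.prod_congr rfl fun j _ => ?_
    have : ((fun j => Rot ((v j : ℝ) / q)) ^ t) j = (Rot ((v j : ℝ) / q)) ^ t := rfl
    rw [Pi.sub_apply, Pi.smul_apply, Pi.one_apply, this, block_det q hqR t (v j) z,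
      keyF (v j), keyFneg (v j)]
  -- combine the two products into a product over the index type
  rw [hdet n r, hdet k s]
  trans (∏ i : Fin n ⊕ Fin k, (F (((Sum.elim r s i : ℤ) : ZMod q))
      * F (-((Sum.elim r s i : ℤ) : ZMod q))))
  · exact (Fintype.prod_sum_type (fun i : Fin n ⊕ Fin k =>
      F (((Sum.elim r s i : ℤ) : ZMod q)) * F (-((Sum.elim r s i : ℤ) : ZMod q)))).symm
  set g : (Fin n ⊕ Fin k) × Bool → ZMod q := fun p =>
    (if p.2 then ((Sum.elim r s p.1 : ℤ) : ZMod q)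
      else -((Sum.elim r s p.1 : ℤ) : ZMod q)) with hgdef
  have step1 : ∏ i : Fin n ⊕ Fin k,
      (F (((Sum.elim r s i : ℤ) : ZMod q)) * F (-((Sum.elim r s i : ℤ) : ZMod q)))
        = ∏ p : (Fin n ⊕ Fin k) × Bool, F (g p) := by
    rw [Fintype.prod_prod_type]
    refine Fintype.prod_congr _ _ fun i => ?_
    rw [Fintype.prod_bool]
    simp [g]
  rw [step1]
  -- reindex over units
  have hmem : ∀ p, IsUnit (g p) := by
    intro p
    have : g p ∈ Set.range g := Set.mem_range_self p
    rw [hrange] at this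
    exact this
  set h : (Fin n ⊕ Fin k) × Bool → (ZMod q)ˣ := fun p => (hmem p).unit with hhdef
  have hcoe : ∀ p, ((h p : (ZMod q)ˣ) : ZMod q) = g p := fun p => (hmem p).unit_spec
  have hbij : Function.Bijective h := by
    constructor
    · intro p p' hpp'
      apply hinj
      show g p = g p'
      rw [← hcoe p, ← hcoe p', hpp']
    · intro u
      have : (u : ZMod q) ∈ Set.range g := by rw [hrange]; exact u.isUnit
      obtain ⟨p, hp⟩ := this
      exact ⟨p, Units.ext (by rw [hcoe p, hp])⟩
  rw [Fintype.prod_bijective h hbij _ (fun u : (ZMod q)ˣ => F (u : ZMod q))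
    (fun p => (congrArg F (hcoe p)).symm)]
  -- absorb the factor t
  set c : (ZMod q)ˣ := ZMod.unitOfCoprime t ht with hcdef
  have habs : ∀ u : (ZMod q)ˣ, F (u : ZMod q) = z - ζ ^ (((c * u : (ZMod q)ˣ) : ZMod q)).val := by
    intro u
    show z - ζ ^ (t * ((u : ZMod q)).val) = _
    congr 1
    rw [← zpow_natCast, ← zpow_natCast]
    apply zcongr
    push_cast [ZMod.natCast_val, ZMod.cast_id]
    simp [c, ZMod.coe_unitOfCoprime]
  rw [Fintype.prod_congr _ _ habs]
  rw [Fintype.prod_bijective (fun u : (ZMod q)ˣ => c * u)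
    (Group.mulLeft_bijective c) _ (fun u : (ZMod q)ˣ => z - ζ ^ ((u : ZMod q)).val)
    (fun u => rfl)]
  -- final bijection with primitive roots
  refine Finset.prod_nbij (fun u : (ZMod q)ˣ => ζ ^ ((u : ZMod q)).val) ?_ ?_ ?_ ?_
  · intro u _
    rw [mem_primitiveRoots hq0]
    exact hζ.pow_of_coprime _ (ZMod.val_coe_unit_coprime u)
  · intro u _ u' _ huu'
    have := hζ.pow_inj (ZMod.val_lt _) (ZMod.val_lt _) huu'
    exact Units.ext (ZMod.val_injective q this)
  · intro η hη
    rw [Finset.mem_coe, mem_primitiveRoots hq0] at hη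
    obtain ⟨i, hi, rfl⟩ := hζ.eq_pow_of_pow_eq_one hη.pow_eq_one
    have hco : Nat.Coprime i q := (hζ.pow_iff_coprime hq0 i).1 hη
    refine ⟨ZMod.unitOfCoprime i hco, by simp, ?_⟩
    simp only [ZMod.coe_unitOfCoprime]
    rw [ZMod.val_natCast, Nat.mod_eq_of_lt hi]
  · intro u _
    rfl
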